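/- arXiv:1408.5981 — 5 statements merged into one kernel-verified Lean document; each statement's English description precedes it below -/
import Mathlib

section
/- Forward reductions preserve erasure-level reduction: if ⟨∘⟩ρ ∥ ⟨∘⟩σ —τ→* ⟨∘⟩ρ' ∥ ⟨∘⟩σ' (a sequence of forward τ-steps with trivial pasts), then erase(ρ) ∥ erase(σ) reduces to erase(ρ') ∥ erase(σ') in the standard checkpoint-free session behaviour calculus, where each (⊕)-fused step is split into an internal-choice step followed by a communication step. -/
/-- Session behaviours with checkpoints (recursion-free fragment):
`one` is success, `ext ck br` an external choice (checkpointed when `ck = true`),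
`int ck br` an internal choice over conames (checkpointed when `ck = true`). -/
inductive SB : Type
  | one : SB
  | ext : Bool → List (ℕ × SB) → SB
  | int : Bool → List (ℕ × SB) → SB

namespace SB

/-- Duality: exchange names/conames and external/internal choices, preserving checkpoints. -/
def dual : SB → SB
  | .one => .one
  | .ext c br => .int c (br.attach.map (fun p => (p.1.1, dual p.1.2)))
  | .int c br => .ext c (br.attach.map (fun p => (p.1.1, dual p.1.2)))
decreasing_by
  all_goals
    simp_wf
    cases p with | mk v h =>
      have := List.sizeOf_lt_of_mem h
      cases v; simp_all; omega

/-- Erase all checkpoint markers. -/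
def erase : SB → SB
  | .one => .one
  | .ext _ br => .ext false (br.attach.map (fun p => (p.1.1, erase p.1.2)))
  | .int _ br => .int false (br.attach.map (fun p => (p.1.1, erase p.1.2)))
decreasing_by
  all_goals
    simp_wf
    cases p with | mk v h =>
      have := List.sizeOf_lt_of_mem h
      cases v; simp_all; omega

/-- Names heading the top-level external choice (looking through a checkpoint). -/
def sumacts : SB → Finset ℕ
  | .ext _ br => (br.map Prod.fst).toFinset
  | _ => ∅

/-- Names of the conames heading the top-level internal choice. -/
def oplusacts : SB → Finset ℕ
  | .int _ br => (br.map Prod.fst).toFinset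
  | _ => ∅

/-- Does the behaviour start with a checkpoint ▲ ? -/
def hasCk : SB → Bool
  | .ext c _ => c
  | .int c _ => c
  | .one => false

/-- σ ∈ 𝒮▲ : σ starts with a checkpoint. -/
def Ckpt (s : SB) : Prop := s.hasCk = true

/-- Checkpoint-free behaviours. -/
inductive CkFree : SB → Prop
  | one : CkFree .one
  | ext : ∀ {br}, (∀ p ∈ br, CkFree (Prod.snd p)) → CkFree (.ext false br)
  | int : ∀ {br}, (∀ p ∈ br, CkFree (Prod.snd p)) → CkFree (.int false br)

/-- Well-formed behaviours: all choices are non-empty with pairwise distinct names. -/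
inductive WF : SB → Prop
  | one : WF .one
  | ext : ∀ {c br}, br ≠ [] → (br.map Prod.fst).Nodup →
      (∀ p ∈ br, WF (Prod.snd p)) → WF (.ext c br)
  | int : ∀ {c br}, br ≠ [] → (br.map Prod.fst).Nodup →
      (∀ p ∈ br, WF (Prod.snd p)) → WF (.int c br)

end SB

/-- Action labels: names and conames. -/
inductive Lab : Type
  | name (a : ℕ)
  | coname (a : ℕ)

/-- The LTS on configurations ⟨γ⟩σ, where the past γ is `none` (= ∘) or `some` behaviour.
Rules (+), (⊕) and (▲) of the paper. -/
inductive Step : Option SB → SB → Lab → Option SB → SB → Prop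
  | ext {γ a s br} : (a, s) ∈ br → Step γ (.ext false br) (.name a) γ s
  | int {γ a s br} : (a, s) ∈ br → Step γ (.int false br) (.coname a) γ s
  | ckExt {γ a s br} : (a, s) ∈ br →
      Step γ (.ext true br) (.name a) (some (.ext true br)) s
  | ckInt {γ a s br} : (a, s) ∈ br →
      Step γ (.int true br) (.coname a) (some (.int true br)) s

/-- The function b(γ, σ): returns σ if it is checkpointed, γ otherwise. -/
def bfun (γ : Option SB) (s : SB) : Option SB := if s.hasCk then some s else γ

/-- Configurations ⟨γ⟩σ. -/
abbrev Config := Option SB × SB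

inductive PLab : Type
  | tau
  | rbk

/-- Communication reduction of client/server pairs: τ-synchronisation of dual actions
(with side condition oplusacts ⊆ sumacts of the partner) and synchronous rollback. -/
inductive PStep : Config → Config → PLab → Config → Config → Prop
  | comL {δ ρ γ σ δ' ρ' γ' σ' a} :
      Step δ ρ (.name a) δ' ρ' → Step γ σ (.coname a) γ' σ' →
      σ.oplusacts ⊆ ρ.sumacts → PStep (δ, ρ) (γ, σ) .tau (δ', ρ') (γ', σ')
  | comR {δ ρ γ σ δ' ρ' γ' σ' a} :
      Step δ ρ (.coname a) δ' ρ' → Step γ σ (.name a) γ' σ' →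
      ρ.oplusacts ⊆ σ.sumacts → PStep (δ, ρ) (γ, σ) .tau (δ', ρ') (γ', σ')
  | rbk {d ρ g σ} : PStep (some d, ρ) (some g, σ) .rbk (none, d) (none, g)

/-- The functional H whose greatest fixed point is checkpoint compliance. -/
def Hfun (R : Config → Config → Prop) (p q : Config) : Prop :=
  ((¬ ∃ p' q', PStep p q .tau p' q') →
      p.2 = .one ∧ ((p.1 = none ∧ q.1 = none) ∨
        (∃ d g, p.1 = some d ∧ q.1 = some g ∧ SB.Ckpt d ∧ SB.Ckpt g)))
  ∧ (∀ β p' q', PStep p q β p' q' → R p' q')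

/-- Checkpoint compliance ⊣▲ : the greatest fixed point of H, i.e. the union of all
checkpoint compliance relations R ⊆ H(R). -/
def CkCompl (p q : Config) : Prop :=
  ∃ R : Config → Config → Prop, (∀ x y, R x y → Hfun R x y) ∧ R p q

/-- The formal (axiomatic) system for checkpoint compliance, with judgments
Γ ⊳ ⟨δ⟩ρ ⊣≺ ⟨γ⟩σ; rules (Hyp), (Ax), (+·⊕) and (⊕·+). -/
inductive Deriv : List (Config × Config) → Config → Config → Prop
  | hyp {Γ p q} : (p, q) ∈ Γ → Deriv Γ p q
  | axNil {Γ σ} : Deriv Γ (none, .one) (none, σ)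
  | axBk {Γ d g σ} : SB.Ckpt d → SB.Ckpt g → Deriv Γ (none, d) (none, g) →
      Deriv Γ (some d, .one) (some g, σ)
  | extInt {Γ δ γ c₁ c₂ brρ brσ} :
      brσ ≠ [] →
      (∀ a sj, (a, sj) ∈ brσ → ∃ rj, (a, rj) ∈ brρ) →
      (∀ a sj rj, (a, sj) ∈ brσ → (a, rj) ∈ brρ →
        Deriv (((δ, SB.ext c₁ brρ), (γ, SB.int c₂ brσ)) :: Γ)
          (bfun δ (SB.ext c₁ brρ), rj) (bfun γ (SB.int c₂ brσ), sj)) →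
      (∀ d g, δ = some d → γ = some g →
        Deriv (((δ, SB.ext c₁ brρ), (γ, SB.int c₂ brσ)) :: Γ) (none, d) (none, g)) →
      Deriv Γ (δ, SB.ext c₁ brρ) (γ, SB.int c₂ brσ)
  | intExt {Γ δ γ c₁ c₂ brρ brσ} :
      brρ ≠ [] →
      (∀ a ri, (a, ri) ∈ brρ → ∃ si, (a, si) ∈ brσ) →
      (∀ a ri si, (a, ri) ∈ brρ → (a, si) ∈ brσ →
        Deriv (((δ, SB.int c₁ brρ), (γ, SB.ext c₂ brσ)) :: Γ)
          (bfun δ (SB.int c₁ brρ), ri) (bfun γ (SB.ext c₂ brσ), si)) →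
      (∀ d g, δ = some d → γ = some g →
        Deriv (((δ, SB.int c₁ brρ), (γ, SB.ext c₂ brσ)) :: Γ) (none, d) (none, g)) →
      Deriv Γ (δ, SB.int c₁ brρ) (γ, SB.ext c₂ brσ)

/-- Standard (checkpoint-free) session behaviours, with an explicit committed
coname prefix `pre a σ` (= ā.σ) arising after a silent internal choice. -/
inductive PB : Type
  | one : PB
  | ext : List (ℕ × PB) → PB
  | int : List (ℕ × PB) → PB
  | pre : ℕ → PB → PB

/-- Erasure of checkpointed behaviours into standard ones. -/
def SB.toPB : SB → PB
  | .one => .one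
  | .ext _ br => .ext (br.attach.map (fun p => (p.1.1, SB.toPB p.1.2)))
  | .int _ br => .int (br.attach.map (fun p => (p.1.1, SB.toPB p.1.2)))
decreasing_by
  all_goals
    simp_wf
    cases p with | mk v h =>
      have := List.sizeOf_lt_of_mem h
      cases v; simp_all; omega

/-- Standard reduction of client/server pairs: an internal choice silently commits to
a branch, then the committed coname synchronises with a matching external choice. -/
inductive SRed : PB × PB → PB × PB → Prop
  | intL {br σ a s} : (a, s) ∈ br → SRed (.int br, σ) (.pre a s, σ)
  | intR {ρ br a s} : (a, s) ∈ br → SRed (ρ, .int br) (ρ, .pre a s)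
  | comL {br a r s} : (a, r) ∈ br → SRed (.ext br, .pre a s) (r, s)
  | comR {br a r s} : (a, s) ∈ br → SRed (.pre a r, .ext br) (r, s)

/-- A pair is stuck if no standard reduction applies. -/
def StdStuck (p : PB × PB) : Prop := ¬ ∃ q, SRed p q

/-- Standard compliance ρ ⊣ σ : every stuck reduct of ρ ∥ σ has client 1. -/
def StdCompl (ρ σ : PB) : Prop :=
  ∀ p, Relation.ReflTransGen SRed (ρ, σ) p → StdStuck p → p.1 = PB.one


lemma mem_toPB {a : ℕ} {s : SB} {br : List (ℕ × SB)} (h : (a, s) ∈ br) :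
    (a, s.toPB) ∈ br.attach.map (fun p => (p.1.1, SB.toPB p.1.2)) :=
  List.mem_map.2 ⟨⟨(a, s), h⟩, List.mem_attach _ _, rfl⟩

lemma step_none {δ : Option SB} {ρ : SB} {l : Lab} {ρ' : SB}
    (h : Step δ ρ l none ρ') : δ = none := by
  cases h <;> rfl

/-- forward τ-reductions of checkpointed pairs are simulated by the
standard (checkpoint-free) reduction on the erased behaviours. -/
theorem tau_red_erase (ρ σ ρ' σ' : SB)
    (h : Relation.ReflTransGen
      (fun x y : Config × Config => PStep x.1 x.2 PLab.tau y.1 y.2)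
      ((none, ρ), (none, σ)) ((none, ρ'), (none, σ'))) :
    Relation.ReflTransGen SRed (ρ.toPB, σ.toPB) (ρ'.toPB, σ'.toPB) := by
  have key : ∀ c, Relation.ReflTransGen
      (fun x y : Config × Config => PStep x.1 x.2 PLab.tau y.1 y.2)
      ((none, ρ), (none, σ)) c → ∀ ρ' σ', c = ((none, ρ'), (none, σ')) →
      Relation.ReflTransGen SRed (ρ.toPB, σ.toPB) (ρ'.toPB, σ'.toPB) := by
    intro c hc
    induction hc with
    | refl => rintro ρ' σ' ⟨rfl⟩; exact Relation.ReflTransGen.refl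
    | @tail b c hpath hstep ih =>
      rintro ρ' σ' rfl
      obtain ⟨⟨δb, ρb⟩, ⟨γb, σb⟩⟩ := b
      simp only at hstep
      cases hstep with
      | comL h1 h2 hsub =>
        have e1 := step_none h1; have e2 := step_none h2
        subst e1; subst e2
        have hb := ih ρb σb rfl
        cases h1 with
        | ext hρ =>
          cases h2 with
          | int hσ =>
            simp only [SB.toPB] at hb
            exact (hb.tail (SRed.intR (mem_toPB hσ))).tail (SRed.comL (mem_toPB hρ))
      | comR h1 h2 hsub =>
        have e1 := step_none h1; have e2 := step_none h2
        subst e1; subst e2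
        have hb := ih ρb σb rfl
        cases h1 with
        | int hρ =>
          cases h2 with
          | ext hσ =>
            simp only [SB.toPB] at hb
            exact (hb.tail (SRed.intL (mem_toPB hρ))).tail (SRed.comR (mem_toPB hσ))
  exact key _ h ρ' σ' rfl
end

section
/- For every finite (recursion-free) session behaviour with checkpoints ρ, ρ is checkpoint compliant with its dual: ⟨∘⟩ρ ⊣▲ ⟨∘⟩ρ̄. -/
/-- Checkpoint compliance ⊣▲ : the greatest fixed point of H, i.e. the union of all
checkpoint compliance relations R ⊆ H(R). -/
def CkptCompl (p q : Config) : Prop :=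
  ∃ R : Config → Config → Prop, (∀ x y, R x y → Hfun R x y) ∧ R p q

namespace ComplDualProof

open SB

theorem sb_ind (P : SB → Prop) (h1 : P .one)
    (h2 : ∀ c br, (∀ p ∈ br, P (Prod.snd p)) → P (.ext c br))
    (h3 : ∀ c br, (∀ p ∈ br, P (Prod.snd p)) → P (.int c br)) : ∀ s, P s := by
  intro s
  generalize hn : sizeOf s = n
  induction n using Nat.strong_induction_on generalizing s with
  | _ n ih =>
    subst hn
    cases s with
    | one => exact h1
    | ext c br =>
      refine h2 c br (fun p hp => ih _ ?_ _ rfl)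
      have := List.sizeOf_lt_of_mem hp
      cases p; simp_all; omega
    | int c br =>
      refine h3 c br (fun p hp => ih _ ?_ _ rfl)
      have := List.sizeOf_lt_of_mem hp
      cases p; simp_all; omega

theorem dual_ext (c br) :
    SB.dual (.ext c br) = .int c (br.map (fun p => (p.1, SB.dual p.2))) := by
  rw [SB.dual]
  congr 1
  rw [← List.attach_map_val (l := br) (f := fun p => (p.1, SB.dual p.2))]

theorem dual_int (c br) :
    SB.dual (.int c br) = .ext c (br.map (fun p => (p.1, SB.dual p.2))) := by
  rw [SB.dual]
  congr 1
  rw [← List.attach_map_val (l := br) (f := fun p => (p.1, SB.dual p.2))]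

theorem hasCk_dual (s : SB) : s.dual.hasCk = s.hasCk := by
  cases s <;> simp [dual_ext, dual_int, SB.dual, SB.hasCk]

theorem ckpt_dual {s : SB} (h : SB.Ckpt s) : SB.Ckpt s.dual := by
  unfold SB.Ckpt at *; rw [hasCk_dual]; exact h

theorem wf_dual : ∀ {s : SB}, SB.WF s → SB.WF s.dual := by
  have : ∀ s : SB, SB.WF s → SB.WF s.dual := by
    refine sb_ind _ ?_ ?_ ?_
    · intro _; rw [SB.dual]; exact SB.WF.one
    · intro c br ih hwf
      cases hwf with
      | ext hne hnd hall =>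
        rw [dual_ext]
        refine SB.WF.int (by simpa using hne) ?_ ?_
        · simpa [List.map_map, Function.comp_def] using hnd
        · intro p hp
          simp only [List.mem_map] at hp
          obtain ⟨q, hq, rfl⟩ := hp
          exact ih q hq (hall q hq)
    · intro c br ih hwf
      cases hwf with
      | int hne hnd hall =>
        rw [dual_int]
        refine SB.WF.ext (by simpa using hne) ?_ ?_
        · simpa [List.map_map, Function.comp_def] using hnd
        · intro p hp
          simp only [List.mem_map] at hp
          obtain ⟨q, hq, rfl⟩ := hp
          exact ih q hq (hall q hq)
  exact fun {s} => this s

theorem key_unique {br : List (ℕ × SB)} (hnd : (br.map Prod.fst).Nodup)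
    {a : ℕ} {s s' : SB} (h1 : (a, s) ∈ br) (h2 : (a, s') ∈ br) : s = s' := by
  induction br with
  | nil => cases h1
  | cons hd tl ih =>
    simp only [List.map_cons, List.nodup_cons] at hnd
    rcases List.mem_cons.1 h1 with h1 | h1 <;> rcases List.mem_cons.1 h2 with h2 | h2
    · rw [← h1] at h2; exact congrArg Prod.snd h2.symm
    · exfalso; apply hnd.1; rw [← h1]
      exact List.mem_map.2 ⟨(a, s'), h2, rfl⟩
    · exfalso; apply hnd.1; rw [← h2]
      exact List.mem_map.2 ⟨(a, s), h1, rfl⟩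
    · exact ih hnd.2 h1 h2

/-- The compliance relation witnessing `Compl (none, ρ) (none, ρ.dual)`. -/
def R : Config → Config → Prop := fun p q =>
  ∃ d r, SB.WF r ∧ p = (d, r) ∧ q = (Option.map SB.dual d, r.dual) ∧
    (d = none ∨ ∃ d0, d = some d0 ∧ SB.Ckpt d0 ∧ SB.WF d0)

theorem R_post : ∀ x y, R x y → Hfun R x y := by
  rintro x y ⟨d, r, hwf, rfl, rfl, hpast⟩
  constructor
  · -- stuckness implies success
    intro hno
    constructor
    · -- r must be .one, else a τ-step exists
      by_contra hne1
      apply hno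
      cases r with
      | one => exact absurd rfl hne1
      | ext c br =>
        cases hwf with
        | ext hne hnd hall =>
          obtain ⟨⟨a, s⟩, hmem⟩ := List.exists_mem_of_ne_nil br hne
          have hmem' : (a, s.dual) ∈ br.map (fun p => (p.1, SB.dual p.2)) :=
            List.mem_map.2 ⟨(a, s), hmem, rfl⟩
          have hside : (SB.int c (br.map fun p => (p.1, SB.dual p.2))).oplusacts
              ⊆ (SB.ext c br).sumacts := by
            simp [SB.oplusacts, SB.sumacts, List.map_map, Function.comp_def]
          cases c with
          | false =>
            rw [dual_ext]
            exact ⟨_, _, PStep.comL (Step.ext hmem) (Step.int hmem') hside⟩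
          | true =>
            rw [dual_ext]
            exact ⟨_, _, PStep.comL (Step.ckExt hmem) (Step.ckInt hmem') hside⟩
      | int c br =>
        cases hwf with
        | int hne hnd hall =>
          obtain ⟨⟨a, s⟩, hmem⟩ := List.exists_mem_of_ne_nil br hne
          have hmem' : (a, s.dual) ∈ br.map (fun p => (p.1, SB.dual p.2)) :=
            List.mem_map.2 ⟨(a, s), hmem, rfl⟩
          have hside : (SB.int c br).oplusacts
              ⊆ (SB.ext c (br.map fun p => (p.1, SB.dual p.2))).sumacts := by
            simp [SB.oplusacts, SB.sumacts, List.map_map, Function.comp_def]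
          cases c with
          | false =>
            rw [dual_int]
            exact ⟨_, _, PStep.comR (Step.int hmem) (Step.ext hmem') hside⟩
          | true =>
            rw [dual_int]
            exact ⟨_, _, PStep.comR (Step.ckInt hmem) (Step.ckExt hmem') hside⟩
    · -- pasts condition
      rcases hpast with rfl | ⟨d0, rfl, hck, _⟩
      · left; exact ⟨rfl, rfl⟩
      · right; exact ⟨d0, d0.dual, rfl, rfl, hck, ckpt_dual hck⟩
  · -- step closure
    intro β p' q' hstep
    cases hstep with
    | comL h1 h2 hside =>
      cases h1 with
      | ext hmem =>
        rw [dual_ext] at h2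
        cases h2 with
        | int hmem2 =>
          obtain ⟨⟨a', s'⟩, hmem'', heq⟩ := List.mem_map.1 hmem2
          obtain ⟨rfl, rfl⟩ := Prod.mk.injEq .. ▸ heq
          cases hwf with
          | ext hne hnd hall =>
            have : s' = _ := key_unique hnd hmem'' hmem
            subst this
            exact ⟨d, _, hall _ hmem'', rfl, rfl, hpast⟩
      | ckExt hmem =>
        rw [dual_ext] at h2
        cases h2 with
        | ckInt hmem2 =>
          obtain ⟨⟨a', s'⟩, hmem'', heq⟩ := List.mem_map.1 hmem2
          obtain ⟨rfl, rfl⟩ := Prod.mk.injEq .. ▸ heq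
          cases hwf with
          | ext hne hnd hall =>
            have : s' = _ := key_unique hnd hmem'' hmem
            subst this
            refine ⟨some (SB.ext true _), _, hall _ hmem'', rfl, ?_, ?_⟩
            · rw [Option.map_some, dual_ext]
            · exact Or.inr ⟨_, rfl, rfl, SB.WF.ext hne hnd hall⟩
    | comR h1 h2 hside =>
      cases h1 with
      | int hmem =>
        rw [dual_int] at h2
        cases h2 with
        | ext hmem2 =>
          obtain ⟨⟨a', s'⟩, hmem'', heq⟩ := List.mem_map.1 hmem2
          obtain ⟨rfl, rfl⟩ := Prod.mk.injEq .. ▸ heq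
          cases hwf with
          | int hne hnd hall =>
            have : s' = _ := key_unique hnd hmem'' hmem
            subst this
            exact ⟨d, _, hall _ hmem'', rfl, rfl, hpast⟩
      | ckInt hmem =>
        rw [dual_int] at h2
        cases h2 with
        | ckExt hmem2 =>
          obtain ⟨⟨a', s'⟩, hmem'', heq⟩ := List.mem_map.1 hmem2
          obtain ⟨rfl, rfl⟩ := Prod.mk.injEq .. ▸ heq
          cases hwf with
          | int hne hnd hall =>
            have : s' = _ := key_unique hnd hmem'' hmem
            subst this
            refine ⟨some (SB.int true _), _, hall _ hmem'', rfl, ?_, ?_⟩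
            · rw [Option.map_some, dual_int]
            · exact Or.inr ⟨_, rfl, rfl, SB.WF.int hne hnd hall⟩
    | rbk =>
      rcases hpast with h | ⟨d1, hd1, hck, hwf0⟩
      · exact absurd h (by simp)
      · injection hd1 with h
        subst h
        exact ⟨none, _, hwf0, rfl, rfl, Or.inl rfl⟩

end ComplDualProof

/-- every (well-formed, recursion-free) behaviour is checkpoint
compliant with its dual. -/


theorem compl_dual (ρ : SB) (h : SB.WF ρ) :
    CkptCompl (none, ρ) (none, ρ.dual) :=
  ⟨ComplDualProof.R, ComplDualProof.R_post, none, ρ, h, rfl, rfl, Or.inl rfl⟩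
end

section
/- Checkpoint compliance is conservative over standard compliance: if ⟨∘⟩ρ ⊣▲ ⟨∘⟩σ then erase(ρ) ⊣ erase(σ), where ⊣ is the standard compliance of checkpoint-free session behaviours. -/
namespace Conserv

lemma toPB_one : SB.one.toPB = PB.one := by rw [SB.toPB]

lemma toPB_ext (c : Bool) (br : List (ℕ × SB)) :
    (SB.ext c br).toPB = PB.ext (br.map (fun p => (p.1, p.2.toPB))) := by
  rw [SB.toPB]; congr 1; exact List.attach_map_val (l := br) (f := fun p => (p.1, p.2.toPB))

lemma toPB_int (c : Bool) (br : List (ℕ × SB)) :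
    (SB.int c br).toPB = PB.int (br.map (fun p => (p.1, p.2.toPB))) := by
  rw [SB.toPB]; congr 1; exact List.attach_map_val (l := br) (f := fun p => (p.1, p.2.toPB))

lemma mem_map_toPB {a : ℕ} {t : PB} {br : List (ℕ × SB)}
    (h : (a, t) ∈ br.map (fun p => (p.1, p.2.toPB))) :
    ∃ s, (a, s) ∈ br ∧ t = s.toPB := by
  simp only [List.mem_map, Prod.mk.injEq] at h
  obtain ⟨⟨a', s⟩, hm, rfl, rfl⟩ := h
  exact ⟨s, hm, rfl⟩

lemma map_toPB_mem {a : ℕ} {s : SB} {br : List (ℕ × SB)} (h : (a, s) ∈ br) :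
    (a, s.toPB) ∈ br.map (fun p => (p.1, p.2.toPB)) :=
  List.mem_map.mpr ⟨(a, s), h, rfl⟩

lemma compl_step {p q β p' q'} (h : CkCompl p q) (hs : PStep p q β p' q') :
    CkCompl p' q' := by
  obtain ⟨R, hR, hpq⟩ := h
  exact ⟨R, hR, (hR _ _ hpq).2 _ _ _ hs⟩

lemma compl_stuck {p q} (h : CkCompl p q)
    (hn : ¬ ∃ p' q', PStep p q .tau p' q') : p.2 = .one := by
  obtain ⟨R, hR, hpq⟩ := h
  exact ((hR _ _ hpq).1 hn).1

lemma no_name_int {δ c br a δ' s} : ¬ Step δ (.int c br) (.name a) δ' s := by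
  intro h; cases h

lemma no_coname_ext {δ c br a δ' s} : ¬ Step δ (.ext c br) (.coname a) δ' s := by
  intro h; cases h

lemma no_step_one {δ l δ' s} : ¬ Step δ .one l δ' s := by intro h; cases h

lemma step_int_inv {δ c br a δ' s} (h : Step δ (.int c br) (.coname a) δ' s) :
    (a, s) ∈ br := by cases h <;> assumption

lemma step_ext {δ c br a s} (h : (a, s) ∈ br) :
    ∃ δ', Step δ (.ext c br) (.name a) δ' s := by
  cases c
  · exact ⟨δ, .ext h⟩
  · exact ⟨some (.ext true br), .ckExt h⟩

lemma step_int {δ c br a s} (h : (a, s) ∈ br) :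
    ∃ δ', Step δ (.int c br) (.coname a) δ' s := by
  cases c
  · exact ⟨δ, .int h⟩
  · exact ⟨some (.int true br), .ckInt h⟩

lemma mem_oplusacts {a : ℕ} {s : SB} {c br} (h : (a, s) ∈ br) :
    a ∈ (SB.int c br).oplusacts := by
  simp only [SB.oplusacts, List.mem_toFinset, List.mem_map]
  exact ⟨(a, s), h, rfl⟩

lemma mem_sumacts {a : ℕ} {c br} (h : a ∈ (SB.ext c br).sumacts) :
    ∃ r, (a, r) ∈ br := by
  simp only [SB.sumacts, List.mem_toFinset, List.mem_map] at h
  obtain ⟨⟨a', r⟩, hm, rfl⟩ := h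
  exact ⟨r, hm⟩

lemma compl_int_int {δ c₁ brρ γ c₂ brσ}
    (h : CkCompl (δ, .int c₁ brρ) (γ, .int c₂ brσ)) : False := by
  have h1 := compl_stuck h ?_
  · exact SB.noConfusion h1
  · rintro ⟨p', q', hs⟩
    cases hs with
    | comL h1 h2 _ => exact no_name_int h1
    | comR h1 h2 _ => exact no_name_int h2

lemma compl_int_one {δ c₁ brρ γ}
    (h : CkCompl (δ, .int c₁ brρ) (γ, .one)) : False := by
  have h1 := compl_stuck h ?_
  · exact SB.noConfusion h1
  · rintro ⟨p', q', hs⟩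
    cases hs with
    | comL h1 h2 _ => exact no_name_int h1
    | comR h1 h2 _ => exact no_step_one h2

lemma compl_ext_int_subset {δ c₁ brρ γ c₂ brσ}
    (h : CkCompl (δ, .ext c₁ brρ) (γ, .int c₂ brσ)) :
    (SB.int c₂ brσ).oplusacts ⊆ (SB.ext c₁ brρ).sumacts := by
  by_contra hsub
  have h1 := compl_stuck h ?_
  · exact SB.noConfusion h1
  · rintro ⟨p', q', hs⟩
    cases hs with
    | comL h1 h2 hss => exact hsub hss
    | comR h1 h2 _ => exact no_coname_ext h1

lemma compl_int_ext_subset {δ c₁ brρ γ c₂ brσ}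
    (h : CkCompl (δ, .int c₁ brρ) (γ, .ext c₂ brσ)) :
    (SB.int c₁ brρ).oplusacts ⊆ (SB.ext c₂ brσ).sumacts := by
  by_contra hsub
  have h1 := compl_stuck h ?_
  · exact SB.noConfusion h1
  · rintro ⟨p', q', hs⟩
    cases hs with
    | comL h1 _ _ => exact no_name_int h1
    | comR _ _ hss => exact hsub hss

/-- The simulation invariant relating standard states to checkpointed configurations. -/
inductive Inv : PB × PB → Prop
  | base {δ p γ q} : CkCompl (δ, p) (γ, q) → Inv (p.toPB, q.toPB)
  | preR {δ p γ c brσ a s x} : CkCompl (δ, p) (γ, .int c brσ) → (a, s) ∈ brσ →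
      p.toPB = x → Inv (x, .pre a s.toPB)
  | preL {δ c brρ γ q a r y} : CkCompl (δ, .int c brρ) (γ, q) → (a, r) ∈ brρ →
      q.toPB = y → Inv (.pre a r.toPB, y)

lemma inv_step {st st'} (h : Inv st) (hs : SRed st st') : Inv st' := by
  cases h with
  | @base δ p γ q hc =>
    cases p <;> cases q <;>
      simp only [toPB_one, toPB_ext, toPB_int] at hs <;>
      cases hs <;>
      (rename_i hm; obtain ⟨s, hm', rfl⟩ := mem_map_toPB hm) <;>
      first
        | exact Inv.preL hc hm' (by simp only [toPB_one, toPB_ext, toPB_int])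
        | exact Inv.preR hc hm' (by simp only [toPB_one, toPB_ext, toPB_int])
  | @preR δ p γ c brσ a s x hc hm hx =>
    subst hx
    cases p <;> simp only [toPB_one, toPB_ext, toPB_int] at hs <;> cases hs
    case ext.comL c₁ brρ t hm' =>
      obtain ⟨r, hr, rfl⟩ := mem_map_toPB hm'
      obtain ⟨δ', h1⟩ := step_ext (δ := δ) (c := c₁) hr
      obtain ⟨γ', h2⟩ := step_int (δ := γ) (c := c) hm
      exact Inv.base (compl_step hc (PStep.comL h1 h2 (compl_ext_int_subset hc)))
    case int.intL => exact (compl_int_int hc).elim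
  | @preL δ c brρ γ q a r y hc hm hy =>
    subst hy
    cases q <;> simp only [toPB_one, toPB_ext, toPB_int] at hs <;> cases hs
    case ext.comR c₂ brσ t hm' =>
      obtain ⟨s, hsm, rfl⟩ := mem_map_toPB hm'
      obtain ⟨δ', h1⟩ := step_int (δ := δ) (c := c) hm
      obtain ⟨γ', h2⟩ := step_ext (δ := γ) (c := c₂) hsm
      exact Inv.base (compl_step hc (PStep.comR h1 h2 (compl_int_ext_subset hc)))
    case int.intR => exact (compl_int_int hc).elim

lemma inv_stuck {st} (h : Inv st) (hstk : StdStuck st) : st.1 = PB.one := by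
  cases h with
  | @base δ p γ q hc =>
    cases p with
    | one => exact toPB_one
    | ext c₁ brρ =>
      exfalso
      cases q with
      | one =>
        have h1 := compl_stuck hc ?_
        · exact SB.noConfusion h1
        · rintro ⟨p', q', hst⟩
          cases hst with
          | comL _ h2 _ => exact no_step_one h2
          | comR h1 _ _ => exact no_coname_ext h1
      | ext c₂ brσ =>
        have h1 := compl_stuck hc ?_
        · exact SB.noConfusion h1
        · rintro ⟨p', q', hst⟩
          cases hst with
          | comL _ h2 _ => exact no_coname_ext h2
          | comR h1 _ _ => exact no_coname_ext h1
      | int c₂ brσ =>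
        cases brσ with
        | nil =>
          have h1 := compl_stuck hc ?_
          · exact SB.noConfusion h1
          · rintro ⟨p', q', hst⟩
            cases hst with
            | comL _ h2 _ => exact List.not_mem_nil (step_int_inv h2)
            | comR h1 _ _ => exact no_coname_ext h1
        | cons hd tl =>
          rw [toPB_int] at hstk
          exact hstk ⟨_, SRed.intR (a := hd.1) (s := hd.2.toPB)
            (map_toPB_mem (by simp [List.mem_cons]))⟩
    | int c₁ brρ =>
      exfalso
      cases brρ with
      | nil =>
        have h1 := compl_stuck hc ?_
        · exact SB.noConfusion h1
        · rintro ⟨p', q', hst⟩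
          cases hst with
          | comL h1 _ _ => exact no_name_int h1
          | comR h1 _ _ => exact List.not_mem_nil (step_int_inv h1)
      | cons hd tl =>
        rw [toPB_int (br := hd :: tl)] at hstk
        exact hstk ⟨_, SRed.intL (a := hd.1) (s := hd.2.toPB)
          (map_toPB_mem (by simp [List.mem_cons]))⟩
  | @preR δ p γ c brσ a s x hc hm hx =>
    subst hx
    cases p with
    | one => exact toPB_one
    | int c₁ brρ => exact (compl_int_int hc).elim
    | ext c₁ brρ =>
      exfalso
      have hsub := compl_ext_int_subset hc
      obtain ⟨r, hr⟩ := mem_sumacts (hsub (mem_oplusacts hm))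
      rw [toPB_ext] at hstk
      exact hstk ⟨_, SRed.comL (map_toPB_mem hr)⟩
  | @preL δ c brρ γ q a r y hc hm hy =>
    subst hy
    exfalso
    cases q with
    | one => exact compl_int_one hc
    | int c₂ brσ => exact compl_int_int hc
    | ext c₂ brσ =>
      have hsub := compl_int_ext_subset hc
      obtain ⟨s, hsm⟩ := mem_sumacts (hsub (mem_oplusacts hm))
      rw [toPB_ext] at hstk
      exact hstk ⟨_, SRed.comR (map_toPB_mem hsm)⟩

end Conserv

/-- checkpoint compliance is conservative over standard compliance. -/
theorem compl_conservative (ρ σ : SB)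
    (h : CkCompl (none, ρ) (none, σ)) : StdCompl ρ.toPB σ.toPB := by
  intro st hred hstuck
  have hinv : Conserv.Inv st := by
    clear hstuck
    induction hred with
    | refl => exact Conserv.Inv.base h
    | tail _ hs ih => exact Conserv.inv_step ih hs
  exact Conserv.inv_stuck hinv hstuck
end

section
/- Soundness of the axiomatic system: if Γ ⊳ ⟨δ⟩ρ ⊣≺ ⟨γ⟩σ is derivable and ⟨δ'⟩ρ' ⊣▲ ⟨γ'⟩σ' holds for every assumption ⟨δ'⟩ρ' ⊣≺ ⟨γ'⟩σ' in Γ, then ⟨δ⟩ρ ⊣▲ ⟨γ⟩σ. -/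
section Aux

theorem Deriv.weaken {Γ p q} (h : Deriv Γ p q) :
    ∀ {Γ'}, Γ ⊆ Γ' → Deriv Γ' p q := by
  induction h with
  | hyp hm => exact fun hs => Deriv.hyp (hs hm)
  | axNil => exact fun _ => Deriv.axNil
  | axBk hd hg _ ih => exact fun hs => Deriv.axBk hd hg (ih hs)
  | extInt hne hmatch _ _ ih₁ ih₂ =>
      intro Γ' hs
      exact Deriv.extInt hne hmatch
        (fun a sj rj h1 h2 => ih₁ a sj rj h1 h2 (List.cons_subset_cons _ hs))
        (fun d g hd hg => ih₂ d g hd hg (List.cons_subset_cons _ hs))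
  | intExt hne hmatch _ _ ih₁ ih₂ =>
      intro Γ' hs
      exact Deriv.intExt hne hmatch
        (fun a ri si h1 h2 => ih₁ a ri si h1 h2 (List.cons_subset_cons _ hs))
        (fun d g hd hg => ih₂ d g hd hg (List.cons_subset_cons _ hs))

theorem Deriv.cut {Γ' r s} (h : Deriv Γ' r s) :
    ∀ {p q : Config} {Γ}, (∀ x ∈ Γ', x = (p, q) ∨ x ∈ Γ) → Deriv Γ p q →
      Deriv Γ r s := by
  induction h with
  | @hyp _ r' s' hm =>
      intro p q Γ hcond hpq
      rcases hcond _ hm with heq | hmem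
      · obtain ⟨h1, h2⟩ := Prod.mk.injEq .. ▸ heq
        rw [h1, h2]; exact hpq
      · exact Deriv.hyp hmem
  | axNil => exact fun _ _ => Deriv.axNil
  | axBk hd hg _ ih => exact fun hcond hpq => Deriv.axBk hd hg (ih hcond hpq)
  | @extInt Γ₁ δ γ c₁ c₂ brρ brσ hne hmatch _ _ ih₁ ih₂ =>
      intro p q Γ hcond hpq
      have hcond' : ∀ x ∈ ((δ, SB.ext c₁ brρ), (γ, SB.int c₂ brσ)) :: Γ₁,
          x = (p, q) ∨ x ∈ ((δ, SB.ext c₁ brρ), (γ, SB.int c₂ brσ)) :: Γ := by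
        intro x hx
        rcases List.mem_cons.1 hx with h | h
        · exact Or.inr (h ▸ List.mem_cons_self)
        · rcases hcond x h with h' | h'
          · exact Or.inl h'
          · exact Or.inr (List.mem_cons_of_mem _ h')
      have hpq' := hpq.weaken (List.subset_cons_self ((δ, SB.ext c₁ brρ), (γ, SB.int c₂ brσ)) _)
      exact Deriv.extInt hne hmatch
        (fun a sj rj h1 h2 => ih₁ a sj rj h1 h2 hcond' hpq')
        (fun d g hd hg => ih₂ d g hd hg hcond' hpq')
  | @intExt Γ₁ δ γ c₁ c₂ brρ brσ hne hmatch _ _ ih₁ ih₂ =>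
      intro p q Γ hcond hpq
      have hcond' : ∀ x ∈ ((δ, SB.int c₁ brρ), (γ, SB.ext c₂ brσ)) :: Γ₁,
          x = (p, q) ∨ x ∈ ((δ, SB.int c₁ brρ), (γ, SB.ext c₂ brσ)) :: Γ := by
        intro x hx
        rcases List.mem_cons.1 hx with h | h
        · exact Or.inr (h ▸ List.mem_cons_self)
        · rcases hcond x h with h' | h'
          · exact Or.inl h'
          · exact Or.inr (List.mem_cons_of_mem _ h')
      have hpq' := hpq.weaken (List.subset_cons_self ((δ, SB.int c₁ brρ), (γ, SB.ext c₂ brσ)) _)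
      exact Deriv.intExt hne hmatch
        (fun a ri si h1 h2 => ih₁ a ri si h1 h2 hcond' hpq')
        (fun d g hd hg => ih₂ d g hd hg hcond' hpq')

theorem Deriv.cutHead {p q r s : Config} {Γ} (h : Deriv ((p, q) :: Γ) r s)
    (hpq : Deriv Γ p q) : Deriv Γ r s :=
  h.cut (fun x hx => List.mem_cons.1 hx) hpq

theorem compl_post {p q} (h : CkptCompl p q) : Hfun CkptCompl p q := by
  obtain ⟨R, hR, hpq⟩ := h
  obtain ⟨h1, h2⟩ := hR _ _ hpq
  exact ⟨h1, fun β p' q' hs => ⟨R, hR, h2 β p' q' hs⟩⟩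

/-- Inversion of `Step` from an external choice. -/
theorem step_ext_inv {δ c br l δ' ρ'} (h : Step δ (SB.ext c br) l δ' ρ') :
    ∃ a, l = .name a ∧ (a, ρ') ∈ br ∧ δ' = bfun δ (SB.ext c br) := by
  cases h with
  | ext hm => exact ⟨_, rfl, hm, by simp [bfun, SB.hasCk]⟩
  | ckExt hm => exact ⟨_, rfl, hm, by simp [bfun, SB.hasCk]⟩

theorem step_int_inv {δ c br l δ' ρ'} (h : Step δ (SB.int c br) l δ' ρ') :
    ∃ a, l = .coname a ∧ (a, ρ') ∈ br ∧ δ' = bfun δ (SB.int c br) := by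
  cases h with
  | int hm => exact ⟨_, rfl, hm, by simp [bfun, SB.hasCk]⟩
  | ckInt hm => exact ⟨_, rfl, hm, by simp [bfun, SB.hasCk]⟩

theorem step_ext {δ c br a s} (hm : (a, s) ∈ br) :
    Step δ (SB.ext c br) (.name a) (bfun δ (SB.ext c br)) s := by
  cases c with
  | false => simpa [bfun, SB.hasCk] using Step.ext hm
  | true => simpa [bfun, SB.hasCk] using Step.ckExt hm

theorem step_int {δ c br a s} (hm : (a, s) ∈ br) :
    Step δ (SB.int c br) (.coname a) (bfun δ (SB.int c br)) s := by
  cases c with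
  | false => simpa [bfun, SB.hasCk] using Step.int hm
  | true => simpa [bfun, SB.hasCk] using Step.ckInt hm

theorem oplus_sub_sum {c₁ c₂ : Bool} {brρ brσ : List (ℕ × SB)}
    (hmatch : ∀ a sj, (a, sj) ∈ brσ → ∃ rj, (a, rj) ∈ brρ) :
    (SB.int c₂ brσ).oplusacts ⊆ (SB.ext c₁ brρ).sumacts := by
  intro a ha
  simp only [SB.oplusacts, SB.sumacts, List.mem_toFinset, List.mem_map] at ha ⊢
  obtain ⟨⟨a', s⟩, hm, rfl⟩ := ha
  obtain ⟨r, hr⟩ := hmatch _ _ hm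
  exact ⟨(a', r), hr, rfl⟩

end Aux

/-- soundness of the axiomatic system with respect to ⊣▲. -/
theorem soundness (Γ : List (Config × Config)) (p q : Config)
    (hder : Deriv Γ p q) (hΓ : ∀ r s, (r, s) ∈ Γ → CkptCompl r s) :
    CkptCompl p q := by
  set R : Config → Config → Prop := fun x y =>
    CkptCompl x y ∨ ∃ Γ₀, Deriv Γ₀ x y ∧ ∀ r s, (r, s) ∈ Γ₀ → CkptCompl r s with hRdef
  refine ⟨R, ?_, Or.inr ⟨Γ, hder, hΓ⟩⟩
  rintro x y (hc | ⟨Γ₀, hd, hΓ₀⟩)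
  · obtain ⟨h1, h2⟩ := compl_post hc
    exact ⟨h1, fun β p' q' hs => Or.inl (h2 β p' q' hs)⟩
  clear hder hΓ
  cases hd with
  | hyp hm =>
      obtain ⟨h1, h2⟩ := compl_post (hΓ₀ _ _ hm)
      exact ⟨h1, fun β p' q' hs => Or.inl (h2 β p' q' hs)⟩
  | axNil =>
      constructor
      · exact fun _ => ⟨rfl, Or.inl ⟨rfl, rfl⟩⟩
      · rintro β p' q' hs
        cases hs with
        | comL h1 _ _ => cases h1
        | comR h1 _ _ => cases h1
  | @axBk _ d g σ hd hg hder' =>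
      constructor
      · exact fun _ => ⟨rfl, Or.inr ⟨d, g, rfl, rfl, hd, hg⟩⟩
      · rintro β p' q' hs
        cases hs with
        | comL h1 _ _ => cases h1
        | comR h1 _ _ => cases h1
        | rbk => exact Or.inr ⟨Γ₀, hder', hΓ₀⟩
  | @extInt _ δ γ c₁ c₂ brρ brσ hne hmatch hbr hrb =>
      have hself : Deriv Γ₀ (δ, SB.ext c₁ brρ) (γ, SB.int c₂ brσ) :=
        Deriv.extInt hne hmatch hbr hrb
      constructor
      · intro hns
        exfalso; apply hns
        obtain ⟨⟨a, s⟩, hm⟩ : ∃ p, p ∈ brσ := List.exists_mem_of_ne_nil _ hne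
        obtain ⟨r, hr⟩ := hmatch _ _ hm
        exact ⟨_, _, PStep.comL (step_ext hr) (step_int hm) (oplus_sub_sum hmatch)⟩
      · rintro β p' q' hs
        cases hs with
        | comL h1 h2 _ =>
            obtain ⟨a, hl, hmρ, hδ⟩ := step_ext_inv h1
            obtain ⟨a', hl', hmσ, hγ⟩ := step_int_inv h2
            cases hl; cases Lab.coname.injEq .. ▸ hl'
            have := (hbr _ _ _ hmσ hmρ).cutHead hself
            exact Or.inr ⟨Γ₀, by rw [hδ, hγ]; exact this, hΓ₀⟩
        | comR h1 _ _ =>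
            obtain ⟨a, hl, _, _⟩ := step_ext_inv h1
            cases hl
        | rbk => exact Or.inr ⟨Γ₀, (hrb _ _ rfl rfl).cutHead hself, hΓ₀⟩
  | @intExt _ δ γ c₁ c₂ brρ brσ hne hmatch hbr hrb =>
      have hself : Deriv Γ₀ (δ, SB.int c₁ brρ) (γ, SB.ext c₂ brσ) :=
        Deriv.intExt hne hmatch hbr hrb
      constructor
      · intro hns
        exfalso; apply hns
        obtain ⟨⟨a, r⟩, hm⟩ : ∃ p, p ∈ brρ := List.exists_mem_of_ne_nil _ hne
        obtain ⟨s, hsm⟩ := hmatch _ _ hm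
        exact ⟨_, _, PStep.comR (step_int hm) (step_ext hsm) (oplus_sub_sum hmatch)⟩
      · rintro β p' q' hs
        cases hs with
        | comL h1 _ _ =>
            obtain ⟨a, hl, _, _⟩ := step_int_inv h1
            cases hl
        | comR h1 h2 _ =>
            obtain ⟨a, hl, hmρ, hδ⟩ := step_int_inv h1
            obtain ⟨a', hl', hmσ, hγ⟩ := step_ext_inv h2
            cases hl; cases Lab.name.injEq .. ▸ hl'
            have := (hbr _ _ _ hmρ hmσ).cutHead hself
            exact Or.inr ⟨Γ₀, by rw [hδ, hγ]; exact this, hΓ₀⟩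
        | rbk => exact Or.inr ⟨Γ₀, (hrb _ _ rfl rfl).cutHead hself, hΓ₀⟩
end

section
/- Completeness of the axiomatic system: if ⟨δ⟩ρ ⊣▲ ⟨γ⟩σ and ⟨δ'⟩ρ' ⊣▲ ⟨γ'⟩σ' holds for every ⟨δ'⟩ρ' ⊣≺ ⟨γ'⟩σ' ∈ Γ, then Γ ⊳ ⟨δ⟩ρ ⊣≺ ⟨γ⟩σ is derivable. -/
/-! ### Auxiliary material for the completeness proof -/

attribute [local instance] Classical.propDecidable

namespace SB

/-- Reflexive subterm closure of a behaviour, as a list. -/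
def subs : SB → List SB
  | .one => [.one]
  | .ext c br => .ext c br :: br.attach.flatMap (fun p => subs p.1.2)
  | .int c br => .int c br :: br.attach.flatMap (fun p => subs p.1.2)
decreasing_by
  all_goals
    simp_wf
    cases p with | mk v h =>
      have := List.sizeOf_lt_of_mem h
      cases v; simp_all; omega

lemma self_mem_subs : ∀ t : SB, t ∈ subs t := by
  intro t; cases t <;> simp [subs]

lemma mem_subs_ext {c br a r} (h : (a, r) ∈ br) : r ∈ subs (.ext c br) := by
  rw [subs]
  exact List.mem_cons.2 (Or.inr (List.mem_flatMap.2
    ⟨⟨(a, r), h⟩, List.mem_attach _ _, self_mem_subs r⟩))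

lemma mem_subs_int {c br a r} (h : (a, r) ∈ br) : r ∈ subs (.int c br) := by
  rw [subs]
  exact List.mem_cons.2 (Or.inr (List.mem_flatMap.2
    ⟨⟨(a, r), h⟩, List.mem_attach _ _, self_mem_subs r⟩))

lemma subs_subset : ∀ t : SB, ∀ s ∈ subs t, subs s ⊆ subs t := by
  intro t
  induction t using SB.subs.induct with
  | case1 => intro s hs; simp [subs] at hs; subst hs; simp
  | case2 c br ih =>
    intro s hs
    rw [subs] at hs
    rcases List.mem_cons.1 hs with h | h
    · subst h; exact fun _ h => h
    · rw [List.mem_flatMap] at h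
      obtain ⟨p, hp, hsp⟩ := h
      intro x hx
      rw [subs]
      exact List.mem_cons.2 (Or.inr (List.mem_flatMap.2 ⟨p, hp, ih p s hsp hx⟩))
  | case3 c br ih =>
    intro s hs
    rw [subs] at hs
    rcases List.mem_cons.1 hs with h | h
    · subst h; exact fun _ h => h
    · rw [List.mem_flatMap] at h
      obtain ⟨p, hp, hsp⟩ := h
      intro x hx
      rw [subs]
      exact List.mem_cons.2 (Or.inr (List.mem_flatMap.2 ⟨p, hp, ih p s hsp hx⟩))

end SB

namespace ComplAux

/-- A list of behaviours closed under taking branch continuations. -/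
def TClosed (T : List SB) : Prop :=
  ∀ s ∈ T, ∀ c br, (s = SB.ext c br ∨ s = SB.int c br) → ∀ a r, (a, r) ∈ br → r ∈ T

/-- All components of a configuration belong to `T`. -/
def InT (T : List SB) (p : Config) : Prop :=
  p.2 ∈ T ∧ ∀ d, p.1 = some d → d ∈ T

lemma closed_step {t s : SB} {c br a r} (hs : s ∈ SB.subs t)
    (hor : s = SB.ext c br ∨ s = SB.int c br) (hr : (a, r) ∈ br) : r ∈ SB.subs t := by
  apply SB.subs_subset t s hs
  rcases hor with rfl | rfl
  · exact SB.mem_subs_ext hr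
  · exact SB.mem_subs_int hr

noncomputable def OTF (T : List SB) : Finset (Option SB) :=
  insert none (T.toFinset.image some)

noncomputable def pairsF (T : List SB) : Finset (Config × Config) :=
  (OTF T ×ˢ T.toFinset) ×ˢ (OTF T ×ˢ T.toFinset)

lemma memOT {T : List SB} {o : Option SB} (h : ∀ d, o = some d → d ∈ T) :
    o ∈ OTF T := by
  cases o with
  | none => exact Finset.mem_insert_self _ _
  | some d =>
    exact Finset.mem_insert_of_mem
      (Finset.mem_image_of_mem _ (List.mem_toFinset.2 (h d rfl)))

lemma mem_pairsF {T : List SB} {p q : Config} (hp : InT T p) (hq : InT T q) :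
    (p, q) ∈ pairsF T := by
  rw [pairsF, Finset.mem_product, Finset.mem_product, Finset.mem_product]
  exact ⟨⟨memOT hp.2, List.mem_toFinset.2 hp.1⟩, memOT hq.2, List.mem_toFinset.2 hq.1⟩

/-- The measure: number of potentially relevant judgments not yet in the context. -/
noncomputable def mea (T : List SB) (Γ : List (Config × Config)) : ℕ :=
  ((pairsF T).filter (fun x => x ∉ Γ)).card

lemma mea_lt {T : List SB} {Γ : List (Config × Config)} {p q : Config}
    (hp : InT T p) (hq : InT T q) (h : (p, q) ∉ Γ) :
    mea T ((p, q) :: Γ) < mea T Γ := by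
  have hsub : (pairsF T).filter (fun x => x ∉ ((p, q) :: Γ)) ⊆
      (pairsF T).filter (fun x => x ∉ Γ) := by
    intro x hx
    rw [Finset.mem_filter] at hx ⊢
    exact ⟨hx.1, fun hm => hx.2 (List.mem_cons_of_mem _ hm)⟩
  have h1 : (p, q) ∈ (pairsF T).filter (fun x => x ∉ Γ) :=
    Finset.mem_filter.2 ⟨mem_pairsF hp hq, h⟩
  have h2 : (p, q) ∉ (pairsF T).filter (fun x => x ∉ ((p, q) :: Γ)) := by
    intro hx
    exact (Finset.mem_filter.1 hx).2 List.mem_cons_self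
  exact Finset.card_lt_card ((Finset.ssubset_iff_of_subset hsub).2 ⟨(p, q), h1, h2⟩)

/-- Indicator: is the client behaviour `1`? -/
def indOne (p : Config) : ℕ := match p.2 with | SB.one => 1 | _ => 0

lemma indOne_le (p : Config) : indOne p ≤ 1 := by
  obtain ⟨d, s⟩ := p; cases s <;> simp [indOne]

/-- An external choice fires a name, updating the past according to `bfun`. -/
lemma stepExtB {δ : Option SB} {c br a r} (h : (a, r) ∈ br) :
    Step δ (SB.ext c br) (Lab.name a) (bfun δ (SB.ext c br)) r := by
  cases c with
  | false =>
    have e : bfun δ (SB.ext false br) = δ := by simp [bfun, SB.hasCk]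
    rw [e]; exact Step.ext h
  | true =>
    have e : bfun δ (SB.ext true br) = some (SB.ext true br) := by simp [bfun, SB.hasCk]
    rw [e]; exact Step.ckExt h

/-- An internal choice fires a coname, updating the past according to `bfun`. -/
lemma stepIntB {δ : Option SB} {c br a r} (h : (a, r) ∈ br) :
    Step δ (SB.int c br) (Lab.coname a) (bfun δ (SB.int c br)) r := by
  cases c with
  | false =>
    have e : bfun δ (SB.int false br) = δ := by simp [bfun, SB.hasCk]
    rw [e]; exact Step.int h
  | true =>
    have e : bfun δ (SB.int true br) = some (SB.int true br) := by simp [bfun, SB.hasCk]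
    rw [e]; exact Step.ckInt h

lemma oplus_subset {c₁ c₂ : Bool} {brρ brσ : List (ℕ × SB)}
    (h : ∀ a sj, (a, sj) ∈ brσ → ∃ rj, (a, rj) ∈ brρ) :
    (SB.int c₂ brσ).oplusacts ⊆ (SB.ext c₁ brρ).sumacts := by
  intro a ha
  simp only [SB.oplusacts, SB.sumacts, List.mem_toFinset, List.mem_map] at ha ⊢
  obtain ⟨⟨a', s⟩, hm, h2⟩ := ha
  cases h2
  obtain ⟨r, hr⟩ := h a' s hm
  exact ⟨(a', r), hr, rfl⟩

lemma subset_oplus {c₁ c₂ : Bool} {brρ brσ : List (ℕ × SB)}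
    (h : (SB.int c₂ brσ).oplusacts ⊆ (SB.ext c₁ brρ).sumacts) :
    ∀ a sj, (a, sj) ∈ brσ → ∃ rj, (a, rj) ∈ brρ := by
  intro a sj hm
  have ha : a ∈ (SB.ext c₁ brρ).sumacts := by
    apply h
    simp only [SB.oplusacts, List.mem_toFinset, List.mem_map]
    exact ⟨(a, sj), hm, rfl⟩
  simp only [SB.sumacts, List.mem_toFinset, List.mem_map] at ha
  obtain ⟨⟨a', r⟩, hm', h2⟩ := ha
  cases h2
  exact ⟨r, hm'⟩

lemma Compl_pstep {p q : Config} {β p' q'} (h : CkCompl p q) (hs : PStep p q β p' q') :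
    CkCompl p' q' := by
  obtain ⟨R, hR, hpq⟩ := h
  exact ⟨R, hR, (hR _ _ hpq).2 _ _ _ hs⟩

lemma Compl_stuck {p q : Config} (h : CkCompl p q)
    (hst : ¬ ∃ p' q', PStep p q PLab.tau p' q') :
    p.2 = SB.one ∧ ((p.1 = none ∧ q.1 = none) ∨
      ∃ d g, p.1 = some d ∧ q.1 = some g ∧ SB.Ckpt d ∧ SB.Ckpt g) := by
  obtain ⟨R, hR, hpq⟩ := h
  exact (hR _ _ hpq).1 hst

lemma hcons {Γ : List (Config × Config)} {p q : Config}
    (hc : CkCompl p q) (hΓ : ∀ r s, (r, s) ∈ Γ → CkCompl r s) :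
    ∀ r s, (r, s) ∈ (p, q) :: Γ → CkCompl r s := by
  intro r s hrs
  rcases List.mem_cons.1 hrs with h | h
  · injection h with h1 h2; subst h1; subst h2; exact hc
  · exact hΓ r s h

lemma InT_bfun {T : List SB} {δ : Option SB} {s r : SB}
    (h : InT T (δ, s)) (hr : r ∈ T) : InT T (bfun δ s, r) := by
  refine ⟨hr, fun d hd => ?_⟩
  unfold bfun at hd
  split at hd
  · cases hd; exact h.1
  · exact h.2 d hd

lemma main (T : List SB) (hT : TClosed T) :
    ∀ n (Γ : List (Config × Config)) (p q : Config),
      CkCompl p q → (∀ r s, (r, s) ∈ Γ → CkCompl r s) →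
      InT T p → InT T q →
      2 * mea T Γ + indOne p ≤ n → Deriv Γ p q := by
  intro n
  induction n with
  | zero =>
    intro Γ p q _ _ hp hq hb
    by_cases hmem : (p, q) ∈ Γ
    · exact Deriv.hyp hmem
    · exfalso
      have h1 : (p, q) ∈ (pairsF T).filter (fun x => x ∉ Γ) :=
        Finset.mem_filter.2 ⟨mem_pairsF hp hq, hmem⟩
      have h2 : 0 < mea T Γ := Finset.card_pos.2 ⟨_, h1⟩
      omega
  | succ n ih =>
    intro Γ p q hc hΓ hp hq hb
    by_cases hmem : (p, q) ∈ Γ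
    · exact Deriv.hyp hmem
    obtain ⟨δ, ρ⟩ := p
    obtain ⟨γ, σ⟩ := q
    cases ρ with
    | one =>
      have hst : ¬ ∃ p' q', PStep (δ, SB.one) (γ, σ) PLab.tau p' q' := by
        rintro ⟨p', q', hs⟩
        cases hs with
        | comL h1 h2 h3 => cases h1
        | comR h1 h2 h3 => cases h1
      obtain ⟨-, hpast⟩ := Compl_stuck hc hst
      rcases hpast with ⟨h1, h2⟩ | ⟨d, g, hd, hg, ckd, ckg⟩
      · have h1' : δ = none := h1
        have h2' : γ = none := h2
        subst h1'; subst h2'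
        exact Deriv.axNil
      · have hd' : δ = some d := hd
        have hg' : γ = some g := hg
        subst hd'; subst hg'
        apply Deriv.axBk ckd ckg
        have hind : indOne (none, d) = 0 := by
          cases d with
          | one => simp [SB.Ckpt, SB.hasCk] at ckd
          | ext c br => rfl
          | int c br => rfl
        apply ih Γ (none, d) (none, g) (Compl_pstep hc PStep.rbk) hΓ
        · exact ⟨hp.2 d rfl, fun x hx => by cases hx⟩
        · exact ⟨hq.2 g rfl, fun x hx => by cases hx⟩
        · have hb1 : indOne ((some d, SB.one) : Config) = 1 := rfl
          omega
    | ext c₁ brρ =>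
      have hind0 : indOne ((δ, SB.ext c₁ brρ) : Config) = 0 := rfl
      cases σ with
      | one =>
        exfalso
        have hst : ¬ ∃ p' q', PStep (δ, SB.ext c₁ brρ) (γ, SB.one) PLab.tau p' q' := by
          rintro ⟨p', q', hs⟩
          cases hs with
          | comL h1 h2 h3 => cases h2
          | comR h1 h2 h3 => cases h1
        have := (Compl_stuck hc hst).1
        simp at this
      | ext c₂ brσ =>
        exfalso
        have hst : ¬ ∃ p' q', PStep (δ, SB.ext c₁ brρ) (γ, SB.ext c₂ brσ) PLab.tau p' q' := by
          rintro ⟨p', q', hs⟩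
          cases hs with
          | comL h1 h2 h3 => cases h2
          | comR h1 h2 h3 => cases h1
        have := (Compl_stuck hc hst).1
        simp at this
      | int c₂ brσ =>
        by_cases hS : brσ ≠ [] ∧ ∀ a sj, (a, sj) ∈ brσ → ∃ rj, (a, rj) ∈ brρ
        · obtain ⟨hne, hmatch⟩ := hS
          have hsub := oplus_subset (c₁ := c₁) (c₂ := c₂) hmatch
          have hlt := mea_lt hp hq hmem
          apply Deriv.extInt hne hmatch
          · intro a sj rj hsj hrj
            have hps : PStep (δ, SB.ext c₁ brρ) (γ, SB.int c₂ brσ) PLab.tau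
                (bfun δ (SB.ext c₁ brρ), rj) (bfun γ (SB.int c₂ brσ), sj) :=
              PStep.comL (stepExtB hrj) (stepIntB hsj) hsub
            apply ih _ _ _ (Compl_pstep hc hps) (hcons hc hΓ)
            · exact InT_bfun hp (hT _ hp.1 c₁ brρ (Or.inl rfl) a rj hrj)
            · exact InT_bfun hq (hT _ hq.1 c₂ brσ (Or.inr rfl) a sj hsj)
            · have := indOne_le ((bfun δ (SB.ext c₁ brρ), rj) : Config)
              omega
          · intro d g hd hg
            subst hd; subst hg
            apply ih _ _ _ (Compl_pstep hc PStep.rbk) (hcons hc hΓ)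
            · exact ⟨hp.2 d rfl, fun x hx => by cases hx⟩
            · exact ⟨hq.2 g rfl, fun x hx => by cases hx⟩
            · have := indOne_le ((none, d) : Config)
              omega
        · exfalso
          have hst : ¬ ∃ p' q', PStep (δ, SB.ext c₁ brρ) (γ, SB.int c₂ brσ) PLab.tau p' q' := by
            rintro ⟨p', q', hs⟩
            cases hs with
            | comL h1 h2 h3 =>
              apply hS
              refine ⟨?_, subset_oplus h3⟩
              cases h2 with
              | int hm => exact List.ne_nil_of_mem hm
              | ckInt hm => exact List.ne_nil_of_mem hm
            | comR h1 h2 h3 => cases h1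
          have := (Compl_stuck hc hst).1
          simp at this
    | int c₁ brρ =>
      have hind0 : indOne ((δ, SB.int c₁ brρ) : Config) = 0 := rfl
      cases σ with
      | one =>
        exfalso
        have hst : ¬ ∃ p' q', PStep (δ, SB.int c₁ brρ) (γ, SB.one) PLab.tau p' q' := by
          rintro ⟨p', q', hs⟩
          cases hs with
          | comL h1 h2 h3 => cases h1
          | comR h1 h2 h3 => cases h2
        have := (Compl_stuck hc hst).1
        simp at this
      | int c₂ brσ =>
        exfalso
        have hst : ¬ ∃ p' q', PStep (δ, SB.int c₁ brρ) (γ, SB.int c₂ brσ) PLab.tau p' q' := by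
          rintro ⟨p', q', hs⟩
          cases hs with
          | comL h1 h2 h3 => cases h1
          | comR h1 h2 h3 => cases h2
        have := (Compl_stuck hc hst).1
        simp at this
      | ext c₂ brσ =>
        by_cases hS : brρ ≠ [] ∧ ∀ a ri, (a, ri) ∈ brρ → ∃ si, (a, si) ∈ brσ
        · obtain ⟨hne, hmatch⟩ := hS
          have hsub := oplus_subset (c₁ := c₂) (c₂ := c₁) hmatch
          have hlt := mea_lt hp hq hmem
          apply Deriv.intExt hne hmatch
          · intro a ri si hri hsi
            have hps : PStep (δ, SB.int c₁ brρ) (γ, SB.ext c₂ brσ) PLab.tau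
                (bfun δ (SB.int c₁ brρ), ri) (bfun γ (SB.ext c₂ brσ), si) :=
              PStep.comR (stepIntB hri) (stepExtB hsi) hsub
            apply ih _ _ _ (Compl_pstep hc hps) (hcons hc hΓ)
            · exact InT_bfun hp (hT _ hp.1 c₁ brρ (Or.inr rfl) a ri hri)
            · exact InT_bfun hq (hT _ hq.1 c₂ brσ (Or.inl rfl) a si hsi)
            · have := indOne_le ((bfun δ (SB.int c₁ brρ), ri) : Config)
              omega
          · intro d g hd hg
            subst hd; subst hg
            apply ih _ _ _ (Compl_pstep hc PStep.rbk) (hcons hc hΓ)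
            · exact ⟨hp.2 d rfl, fun x hx => by cases hx⟩
            · exact ⟨hq.2 g rfl, fun x hx => by cases hx⟩
            · have := indOne_le ((none, d) : Config)
              omega
        · exfalso
          have hst : ¬ ∃ p' q', PStep (δ, SB.int c₁ brρ) (γ, SB.ext c₂ brσ) PLab.tau p' q' := by
            rintro ⟨p', q', hs⟩
            cases hs with
            | comL h1 h2 h3 => cases h1
            | comR h1 h2 h3 =>
              apply hS
              refine ⟨?_, subset_oplus h3⟩
              cases h1 with
              | int hm => exact List.ne_nil_of_mem hm
              | ckInt hm => exact List.ne_nil_of_mem hm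
          have := (Compl_stuck hc hst).1
          simp at this

end ComplAux

/-- Subterms of the content of an optional past. -/
def optSubs : Option SB → List SB
  | none => []
  | some d => SB.subs d

lemma optSubs_closed {o : Option SB} {s : SB} {c br a r} (hs : s ∈ optSubs o)
    (hor : s = SB.ext c br ∨ s = SB.int c br) (hr : (a, r) ∈ br) : r ∈ optSubs o := by
  cases o with
  | none => cases hs
  | some d => exact ComplAux.closed_step hs hor hr

/-- completeness of the axiomatic system with respect to ⊣▲. -/
theorem completeness (Γ : List (Config × Config)) (p q : Config)
    (h : CkCompl p q) (hΓ : ∀ r s, (r, s) ∈ Γ → CkCompl r s) :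
    Deriv Γ p q := by
  classical
  set T : List SB := optSubs p.1 ++ SB.subs p.2 ++ optSubs q.1 ++ SB.subs q.2 with hTdef
  have hT : ComplAux.TClosed T := by
    intro s hs c br hor a r hr
    simp only [hTdef, List.mem_append] at hs ⊢
    rcases hs with ((hs | hs) | hs) | hs
    · exact Or.inl (Or.inl (Or.inl (optSubs_closed hs hor hr)))
    · exact Or.inl (Or.inl (Or.inr (ComplAux.closed_step hs hor hr)))
    · exact Or.inl (Or.inr (optSubs_closed hs hor hr))
    · exact Or.inr (ComplAux.closed_step hs hor hr)
  have hp : ComplAux.InT T p := by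
    constructor
    · simp only [hTdef, List.mem_append]
      exact Or.inl (Or.inl (Or.inr (SB.self_mem_subs _)))
    · intro d hd
      simp only [hTdef, List.mem_append]
      refine Or.inl (Or.inl (Or.inl ?_))
      rw [hd]
      exact SB.self_mem_subs d
  have hq : ComplAux.InT T q := by
    constructor
    · simp only [hTdef, List.mem_append]
      exact Or.inr (SB.self_mem_subs _)
    · intro d hd
      simp only [hTdef, List.mem_append]
      refine Or.inl (Or.inr ?_)
      rw [hd]
      exact SB.self_mem_subs d
  exact ComplAux.main T hT (2 * ComplAux.mea T Γ + ComplAux.indOne p) Γ p q h hΓ hp hq le_rfl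
end
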